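/- Let (X,d) be a metric space and let P_n : [0,T_n] → X (n ∈ ℕ) and P : [0,T] → X be unit-speed geodesics such that the Hausdorff distance between the images of P_n and P tends to 0 and d(P_n(0), P(0)) → 0. Fix 0 ≤ s < t ≤ T. Then the Hausdorff distance between the images P_n([s, min(t, T_n)]) and P([s,t]) tends to 0 as n → ∞. -/
import Mathlib


open Set Metric Filter

/-- If unit-speed geodesics `P_n` converge to a unit-speed geodesic `P` in Hausdorff
distance with starting points converging, then the restrictions to `[s,t]` (suitably
truncated) also converge in Hausdorff distance. -/
theorem restrictions_converge_in_hausdorff {X : Type*} [MetricSpace X]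
    (Tn : ℕ → ℝ) (hTn : ∀ n, 0 ≤ Tn n) (T : ℝ) (hT : 0 ≤ T)
    (Pn : ℕ → ℝ → X) (P : ℝ → X)
    (hPn : ∀ n, ∀ s ∈ Icc (0:ℝ) (Tn n), ∀ t ∈ Icc (0:ℝ) (Tn n),
      dist (Pn n s) (Pn n t) = |s - t|)
    (hP : ∀ s ∈ Icc (0:ℝ) T, ∀ t ∈ Icc (0:ℝ) T, dist (P s) (P t) = |s - t|)
    (hH : Tendsto (fun n => hausdorffDist (Pn n '' Icc 0 (Tn n)) (P '' Icc 0 T))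
      atTop (nhds 0))
    (h0 : Tendsto (fun n => dist (Pn n 0) (P 0)) atTop (nhds 0))
    (s t : ℝ) (hs : 0 ≤ s) (hst : s < t) (htT : t ≤ T) :
    Tendsto (fun n => hausdorffDist (Pn n '' Icc s (min t (Tn n))) (P '' Icc s t))
      atTop (nhds 0) := by
  set H : ℕ → ℝ := fun n => hausdorffDist (Pn n '' Icc 0 (Tn n)) (P '' Icc 0 T) with hHdef
  set d : ℕ → ℝ := fun n => dist (Pn n 0) (P 0) with hddef
  have h0T : (0:ℝ) ∈ Icc (0:ℝ) T := ⟨le_refl 0, hT⟩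
  have hTT : T ∈ Icc (0:ℝ) T := ⟨hT, le_refl T⟩
  have hne : (P '' Icc 0 T).Nonempty := ⟨P 0, mem_image_of_mem _ h0T⟩
  have hnen : ∀ n, (Pn n '' Icc 0 (Tn n)).Nonempty :=
    fun n => ⟨Pn n 0, mem_image_of_mem _ ⟨le_refl 0, hTn n⟩⟩
  have hPbd : Bornology.IsBounded (P '' Icc 0 T) := by
    refine (Metric.isBounded_closedBall (x := P 0) (r := T)).subset ?_
    rintro x ⟨l, hl, rfl⟩
    have := hP l hl 0 h0T
    simp only [Metric.mem_closedBall]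
    rw [this, sub_zero, abs_of_nonneg hl.1]
    exact hl.2
  have hPnbd : ∀ n, Bornology.IsBounded (Pn n '' Icc 0 (Tn n)) := by
    intro n
    refine (Metric.isBounded_closedBall (x := Pn n 0) (r := Tn n)).subset ?_
    rintro x ⟨l, hl, rfl⟩
    have := hPn n l hl 0 ⟨le_refl 0, hTn n⟩
    simp only [Metric.mem_closedBall]
    rw [this, sub_zero, abs_of_nonneg hl.1]
    exact hl.2
  have hfin : ∀ n, EMetric.hausdorffEdist (Pn n '' Icc 0 (Tn n)) (P '' Icc 0 T) ≠ ⊤ :=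
    fun n => hausdorffEdist_ne_top_of_nonempty_of_bounded (hnen n) hne (hPnbd n) hPbd
  have hHnn : ∀ n, 0 ≤ H n := fun n => hausdorffDist_nonneg
  have hdnn : ∀ n, 0 ≤ d n := fun n => dist_nonneg
  -- pointwise bound on the common domain
  have key : ∀ n, ∀ l ∈ Icc (0:ℝ) (min (Tn n) T), dist (Pn n l) (P l) ≤ 2 * H n + d n := by
    intro n l hl
    have hlTn : l ∈ Icc (0:ℝ) (Tn n) := ⟨hl.1, hl.2.trans (min_le_left _ _)⟩
    have hlT : l ∈ Icc (0:ℝ) T := ⟨hl.1, hl.2.trans (min_le_right _ _)⟩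
    refine le_of_forall_pos_le_add ?_
    intro ε hε
    have hlt : H n < H n + ε / 2 := by linarith
    obtain ⟨y, hy, hdy⟩ := exists_dist_lt_of_hausdorffDist_lt
      (mem_image_of_mem _ hlTn) hlt (hfin n)
    obtain ⟨l', hl', rfl⟩ := hy
    have e1 : dist (P l') (P 0) = l' := by
      rw [hP l' hl' 0 h0T, sub_zero, abs_of_nonneg hl'.1]
    have e2 : dist (Pn n l) (Pn n 0) = l := by
      rw [hPn n l hlTn 0 ⟨le_refl 0, hTn n⟩, sub_zero, abs_of_nonneg hl.1]
    have e3 : dist (P l') (P l) = |l' - l| := hP l' hl' l hlT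
    have tri1 : dist (P l') (P 0) ≤ dist (P l') (Pn n l) + dist (Pn n l) (Pn n 0)
        + dist (Pn n 0) (P 0) := dist_triangle4 _ _ _ _
    have tri2 : dist (Pn n l) (Pn n 0) ≤ dist (Pn n l) (P l') + dist (P l') (P 0)
        + dist (P 0) (Pn n 0) := dist_triangle4 _ _ _ _
    have tri3 : dist (Pn n l) (P l) ≤ dist (Pn n l) (P l') + dist (P l') (P l) :=
      dist_triangle _ _ _
    have c1 : dist (P l') (Pn n l) = dist (Pn n l) (P l') := dist_comm _ _
    have c2 : dist (P 0) (Pn n 0) = dist (Pn n 0) (P 0) := dist_comm _ _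
    have hd0 : dist (Pn n 0) (P 0) = d n := rfl
    rw [e3] at tri3
    rcases abs_cases (l' - l) with ⟨he, _⟩ | ⟨he, _⟩ <;> rw [he] at tri3 <;>
      linarith
  -- length bound
  have hlen : ∀ n, T ≤ Tn n + H n + d n := by
    intro n
    refine le_of_forall_pos_le_add ?_
    intro ε hε
    have hlt : hausdorffDist (P '' Icc 0 T) (Pn n '' Icc 0 (Tn n)) < H n + ε := by
      rw [hausdorffDist_comm]; linarith [hHnn n]
    obtain ⟨y, hy, hdy⟩ := exists_dist_lt_of_hausdorffDist_lt
      (mem_image_of_mem _ hTT) hlt (by rw [EMetric.hausdorffEdist_comm]; exact hfin n)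
    obtain ⟨l', hl', rfl⟩ := hy
    have e1 : dist (P T) (P 0) = T := by
      rw [hP T hTT 0 h0T, sub_zero, abs_of_nonneg hT]
    have e2 : dist (Pn n l') (Pn n 0) = l' := by
      rw [hPn n l' hl' 0 ⟨le_refl 0, hTn n⟩, sub_zero, abs_of_nonneg hl'.1]
    have tri : dist (P T) (P 0) ≤ dist (P T) (Pn n l') + dist (Pn n l') (Pn n 0)
        + dist (Pn n 0) (P 0) := dist_triangle4 _ _ _ _
    have : l' ≤ Tn n := hl'.2
    have hd0 : dist (Pn n 0) (P 0) = d n := rfl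
    linarith
  -- main estimate, eventually
  have hE : Tendsto (fun n => H n + d n) atTop (nhds 0) := by
    simpa using hH.add h0
  have hG : Tendsto (fun n => 3 * H n + 2 * d n) atTop (nhds 0) := by
    have := (hH.const_mul 3).add (h0.const_mul 2)
    simpa using this
  have hev : ∀ᶠ n in atTop, H n + d n < t - s :=
    hE.eventually_lt_const (by linarith)
  refine squeeze_zero' (Filter.Eventually.of_forall fun n => hausdorffDist_nonneg)
    (hev.mono fun n hn => ?_) hG
  -- fix n with H n + d n < t - s
  have hEn : H n + d n < t - s := hn
  have hTnlb : t - (H n + d n) ≤ Tn n := by linarith [hlen n]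
  have hsm : s ≤ min t (Tn n) := le_min hst.le (by linarith)
  have htm : t - (H n + d n) ≤ min t (Tn n) := le_min (by linarith [hHnn n, hdnn n]) hTnlb
  refine hausdorffDist_le_of_mem_dist (by linarith [hHnn n, hdnn n]) ?_ ?_
  · rintro x ⟨l, hl, rfl⟩
    refine ⟨P l, mem_image_of_mem _ ⟨hl.1, hl.2.trans (min_le_left _ _)⟩, ?_⟩
    have hl0 : l ∈ Icc (0:ℝ) (min (Tn n) T) :=
      ⟨hs.trans hl.1, le_min (hl.2.trans (min_le_right _ _))
        (hl.2.trans ((min_le_left _ _).trans htT))⟩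
    linarith [key n l hl0, hHnn n, hdnn n]
  · rintro x ⟨l, hl, rfl⟩
    set m := min t (Tn n) with hm
    refine ⟨Pn n (min l m), mem_image_of_mem _ ⟨le_min hl.1 hsm, min_le_right _ _⟩, ?_⟩
    have hlm0 : min l m ∈ Icc (0:ℝ) (min (Tn n) T) := by
      constructor
      · exact le_min (hs.trans hl.1) (hs.trans hsm)
      · refine le_min ((min_le_right _ _).trans (min_le_right _ _)) ?_
        exact (min_le_left _ _).trans (hl.2.trans htT)
    have hlmT : min l m ∈ Icc (0:ℝ) T := ⟨hlm0.1, hlm0.2.trans (min_le_right _ _)⟩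
    have hlT : l ∈ Icc (0:ℝ) T := ⟨hs.trans hl.1, hl.2.trans htT⟩
    have e1 : dist (P l) (P (min l m)) = |l - min l m| := hP l hlT _ hlmT
    have habs : |l - min l m| ≤ H n + d n := by
      rcases le_total l m with h' | h'
      · rw [min_eq_left h', sub_self, abs_zero]; linarith [hHnn n, hdnn n]
      · rw [min_eq_right h', abs_of_nonneg (by linarith)]
        have := hl.2
        linarith [htm]
    have tri : dist (P l) (Pn n (min l m)) ≤ dist (P l) (P (min l m))
        + dist (P (min l m)) (Pn n (min l m)) := dist_triangle _ _ _
    have hk := key n (min l m) hlm0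
    rw [dist_comm (Pn n (min l m)) (P (min l m))] at hk
    linarith [e1 ▸ tri]
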